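/- arXiv:2002.07932 — 8 statements merged into one kernel-verified Lean document; each statement's English description precedes it below -/
import Mathlib

section
/- Let {v_n} be a sequence of monic complex polynomials with deg v_n = n. Let g : ℕ → ℂ with g_0 = 0 and let h : ℕ → ℂ be injective. Let γ and φ be the ℂ-linear operators on ℂ[t] determined on the basis {v_n} by γ v_0 = 0, γ v_k = g_k v_{k-1} for k ≥ 1, and φ v_k = h_k v_k for k ≥ 0. Then for every n ≥ 0 the monic polynomial u_n(t) = Σ_{k=0}^{n} c_{n,k} v_k(t), where c_{n,k} = ∏_{j=k}^{n-1} g_{j+1}/(h_n − h_j) for 0 ≤ k ≤ n−1 and c_{n,n} = 1, satisfies the generalized difference equation γ u_n + φ u_n = h_n u_n. -/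
open Polynomial Finset

/-- the monic polynomials `u n` built from the coefficients
`c n k = ∏_{j=k}^{n-1} g_{j+1}/(h n − h j)` satisfy the generalized
difference equation `γ u_n + φ u_n = h_n • u_n`. -/
theorem stmt0 (v : ℕ → Polynomial ℂ)
    (hmonic : ∀ n, (v n).Monic) (hdeg : ∀ n, (v n).natDegree = n)
    (g h : ℕ → ℂ) (hg0 : g 0 = 0) (hinj : Function.Injective h)
    (γ φ : Polynomial ℂ →ₗ[ℂ] Polynomial ℂ)
    (hγ0 : γ (v 0) = 0) (hγ : ∀ k : ℕ, γ (v (k + 1)) = g (k + 1) • v k)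
    (hφ : ∀ k : ℕ, φ (v k) = h k • v k)
    (u : ℕ → Polynomial ℂ)
    (hu : ∀ n, u n = ∑ k ∈ Finset.range (n + 1),
      (∏ j ∈ Finset.Ico k n, g (j + 1) / (h n - h j)) • v k) :
    ∀ n, γ (u n) + φ (u n) = h n • u n := by
  intro n
  set c : ℕ → ℂ := fun k => ∏ j ∈ Finset.Ico k n, g (j + 1) / (h n - h j) with hc
  have hne : ∀ k, k < n → h n - h k ≠ 0 := by
    intro k hk
    refine sub_ne_zero.mpr fun e => ?_
    have := hinj e
    omega
  have key : ∀ k, k < n → c k * (h n - h k) = c (k + 1) * g (k + 1) := by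
    intro k hk
    rw [hc]
    simp only []
    rw [Finset.prod_eq_prod_Ico_succ_bot hk]
    have e : g (k + 1) / (h n - h k) * (h n - h k) = g (k + 1) :=
      div_mul_cancel₀ _ (hne k hk)
    rw [mul_right_comm, e, mul_comm]
  have hγsum : γ (u n) = ∑ k ∈ Finset.range n, (c (k + 1) * g (k + 1)) • v k := by
    rw [hu n, map_sum, Finset.sum_range_succ']
    simp only [map_smul, hγ, hγ0, smul_zero, add_zero, smul_smul]
    rfl
  have hφsum : φ (u n) = ∑ k ∈ Finset.range (n + 1), (c k * h k) • v k := by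
    rw [hu n, map_sum]
    simp only [map_smul, hφ, smul_smul]
    rfl
  have hrhs : h n • u n = ∑ k ∈ Finset.range (n + 1), (c k * h n) • v k := by
    rw [hu n, Finset.smul_sum]
    simp only [smul_smul]
    exact Finset.sum_congr rfl fun k _ => by rw [mul_comm]
  rw [hγsum, hφsum, hrhs, Finset.sum_range_succ, Finset.sum_range_succ, ← add_assoc,
    ← Finset.sum_add_distrib]
  congr 1
  apply Finset.sum_congr rfl
  intro k hk
  rw [← add_smul]
  congr 1
  have := key k (Finset.mem_range.mp hk)
  linear_combination -this
end

section
/- Let g, h : ℕ → ℂ with h injective. Define c_{n,k} = ∏_{j=k}^{n-1} g_{j+1}/(h_n − h_j) for 0 ≤ k ≤ n−1, c_{n,n} = 1, and ĉ_{n,k} = ∏_{j=k+1}^{n} g_j/(h_k − h_j) for 0 ≤ k ≤ n−1, ĉ_{n,n} = 1. Then for all 0 ≤ k ≤ n, Σ_{j=k}^{n} ĉ_{n,j} c_{j,k} equals 1 if k = n and equals 0 if k < n; that is, the lower triangular matrices [c_{n,k}] and [ĉ_{n,k}] are mutually inverse. -/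
open Finset Polynomial

lemma key_sum {ι F : Type*} [Field F] [DecidableEq ι] (s : Finset ι) (v : ι → F)
    (hv : Set.InjOn v s) (hs : 2 ≤ s.card) :
    ∑ j ∈ s, ∏ i ∈ s.erase j, (v j - v i)⁻¹ = 0 := by
  have h1 : ∀ j ∈ s, ∏ i ∈ s.erase j, (v j - v i)⁻¹
      = (Lagrange.basis s v j).coeff (s.card - 1) := by
    intro j hj
    have hnd := Lagrange.natDegree_basis hv hj
    rw [← hnd, Polynomial.coeff_natDegree, Lagrange.basis, Polynomial.leadingCoeff_prod]
    refine prod_congr rfl fun i hi => ?_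
    rw [mem_erase] at hi
    have hne : v j ≠ v i := fun e => hi.1 (hv hj hi.2 e).symm
    rw [Lagrange.basisDivisor, leadingCoeff_mul, leadingCoeff_X_sub_C, leadingCoeff_C, mul_one]
  rw [Finset.sum_congr rfl h1, ← Polynomial.finset_sum_coeff,
    Lagrange.sum_basis hv (by rw [← card_pos]; omega)]
  rw [Polynomial.coeff_one, if_neg (by omega)]

/-- the lower triangular matrices `[c_{n,k}]` and `[ĉ_{n,k}]`
are mutually inverse, where `c_{n,k} = ∏_{j=k}^{n-1} g_{j+1}/(h_n − h_j)`
and `ĉ_{n,k} = ∏_{j=k+1}^{n} g_j/(h_k − h_j)`. -/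
theorem stmt1 (g h : ℕ → ℂ) (hinj : Function.Injective h) :
    ∀ n k : ℕ, k ≤ n →
      ∑ j ∈ Finset.Icc k n,
          (∏ i ∈ Finset.Icc (j + 1) n, g i / (h j - h i)) *
            (∏ i ∈ Finset.Ico k j, g (i + 1) / (h j - h i)) =
        if k = n then 1 else 0 := by
  intro n k hkn
  rcases eq_or_lt_of_le hkn with rfl | hlt
  · simp
  · rw [if_neg (by omega)]
    have hterm : ∀ j ∈ Icc k n,
        (∏ i ∈ Icc (j + 1) n, g i / (h j - h i)) *
            (∏ i ∈ Ico k j, g (i + 1) / (h j - h i))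
        = (∏ i ∈ Ioc k n, g i) * ∏ i ∈ (Icc k n).erase j, (h j - h i)⁻¹ := by
      intro j hj
      rw [mem_Icc] at hj
      have hsplit : (Icc k n).erase j = Ico k j ∪ Ioc j n := by
        ext x; simp only [mem_erase, mem_Icc, mem_union, mem_Ico, mem_Ioc]; omega
      have hdisj : Disjoint (Ico k j) (Ioc j n) := by
        rw [disjoint_left]; intro x hx hx'
        simp only [mem_Ico, mem_Ioc] at hx hx'; omega
      have e1 : ∏ i ∈ Icc (j + 1) n, g i / (h j - h i)
          = (∏ i ∈ Ioc j n, g i) * ∏ i ∈ Ioc j n, (h j - h i)⁻¹ := by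
        rw [← Finset.Icc_add_one_left_eq_Ioc, ← prod_mul_distrib]
        exact prod_congr rfl fun i _ => div_eq_mul_inv _ _
      have e2 : ∏ i ∈ Ico k j, g (i + 1) / (h j - h i)
          = (∏ i ∈ Ioc k j, g i) * ∏ i ∈ Ico k j, (h j - h i)⁻¹ := by
        have : ∏ i ∈ Ioc k j, g i = ∏ i ∈ Ico k j, g (i + 1) := by
          rw [prod_Ico_add' g k j 1, Finset.Ico_add_one_add_one_eq_Ioc]
        rw [this, ← prod_mul_distrib]
        exact prod_congr rfl fun i _ => div_eq_mul_inv _ _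
      rw [e1, e2, hsplit, prod_union hdisj,
        ← prod_Ioc_consecutive g hj.1 hj.2]
      ring
    rw [Finset.sum_congr rfl hterm, ← mul_sum,
      key_sum (Icc k n) h (hinj.injOn) (by rw [Nat.card_Icc]; omega), mul_zero]
end

section
/- Let g, h, x : ℕ → ℂ with h injective and g_0 = 0. Define c_{n,k} = ∏_{j=k}^{n-1} g_{j+1}/(h_n − h_j) for 0 ≤ k ≤ n−1, c_{n,n} = 1, and the monic polynomials u_n(t) = Σ_{k=0}^{n} c_{n,k} v_k(t) where v_k(t) = ∏_{j=0}^{k-1}(t − x_j). Then for every n ≥ 1 there exist complex numbers λ_0, …, λ_{n-2} such that t·u_n(t) = u_{n+1}(t) + β_n u_n(t) + α_n u_{n-1}(t) + Σ_{k=0}^{n-2} λ_k u_k(t), where β_n = x_n + g_{n+1}/(h_n − h_{n+1}) − g_n/(h_{n-1} − h_n) and α_n = (g_n/(h_{n-1} − h_n))·( g_{n-1}/(h_{n-2} − h_n) − g_n/(h_{n-1} − h_n) + g_{n+1}/(h_{n-1} − h_{n+1}) + x_n − x_{n-1} ), with the convention that for n = 1 the term g_{n-1}/(h_{n-2} − h_n)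 is 0 (its numerator is g_0 = 0). -/
open Polynomial Finset

set_option maxHeartbeats 1000000 in
/-- expanding `t·u_n(t)` in the basis `{u_k}`, the coefficients of
`u_n` and `u_{n-1}` are `β_n = x_n + g_{n+1}/(h_n − h_{n+1}) − g_n/(h_{n-1} − h_n)`
and `α_n = (g_n/(h_{n-1} − h_n))·(g_{n-1}/(h_{n-2} − h_n) − g_n/(h_{n-1} − h_n)
+ g_{n+1}/(h_{n-1} − h_{n+1}) + x_n − x_{n-1})`.  (For `n = 1`, truncated natural
subtraction gives `h (n-2) = h 0` and the term `g_{n-1}/(h_{n-2} − h_n) = g 0 / (h 0 - h 1) = 0`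
since `g 0 = 0`, matching the stated convention.) -/
theorem stmt3 (g h x : ℕ → ℂ) (hinj : Function.Injective h) (hg0 : g 0 = 0)
    (u : ℕ → Polynomial ℂ)
    (hu : ∀ n, u n = ∑ k ∈ Finset.range (n + 1),
      (∏ j ∈ Finset.Ico k n, g (j + 1) / (h n - h j)) •
        ∏ j ∈ Finset.range k, (X - C (x j))) :
    ∀ n, 1 ≤ n → ∃ lam : ℕ → ℂ,
      X * u n = u (n + 1)
        + (x n + g (n + 1) / (h n - h (n + 1)) - g n / (h (n - 1) - h n)) • u n
        + ((g n / (h (n - 1) - h n)) *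
            (g (n - 1) / (h (n - 2) - h n) - g n / (h (n - 1) - h n)
              + g (n + 1) / (h (n - 1) - h (n + 1)) + x n - x (n - 1))) • u (n - 1)
        + ∑ k ∈ Finset.range (n - 1), lam k • u k := by
  have hne : ∀ a b : ℕ, a ≠ b → h a - h b ≠ 0 := fun a b hab =>
    sub_ne_zero.mpr fun e => hab (hinj e)
  obtain ⟨v, hv⟩ : ∃ v : ℕ → Polynomial ℂ,
      ∀ k, v k = ∏ j ∈ Finset.range k, (X - C (x j)) := ⟨_, fun _ => rfl⟩
  obtain ⟨c, hcc⟩ : ∃ c : ℕ → ℕ → ℂ,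
      ∀ m k, c m k = ∏ j ∈ Finset.Ico k m, g (j + 1) / (h m - h j) := ⟨_, fun _ _ => rfl⟩
  have huv : ∀ m, u m = ∑ k ∈ range (m + 1), c m k • v k := by
    intro m; rw [hu m]; exact Finset.sum_congr rfl fun k _ => by rw [hcc, hv]
  have hcdiag : ∀ m, c m m = 1 := fun m => by
    rw [hcc, Finset.Ico_self, Finset.prod_empty]
  have hc1 : ∀ a, c (a + 1) a = g (a + 1) / (h (a + 1) - h a) := fun a => by
    rw [hcc, Finset.prod_Ico_succ_top (le_refl a), Finset.Ico_self, Finset.prod_empty, one_mul]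
  have hc2 : ∀ a, c (a + 2) a
      = g (a + 1) / (h (a + 2) - h a) * (g (a + 2) / (h (a + 2) - h (a + 1))) := fun a => by
    rw [hcc, show a + 2 = (a + 1) + 1 from rfl,
      Finset.prod_Ico_succ_top (Nat.le_succ a),
      Finset.prod_Ico_succ_top (le_refl a), Finset.Ico_self, Finset.prod_empty, one_mul]
  -- span lemma
  have span : ∀ m, ∀ d : ℕ → ℂ, ∃ lam : ℕ → ℂ,
      (∑ k ∈ range m, d k • v k) = ∑ k ∈ range m, lam k • u k := by
    intro m
    induction m with
    | zero => exact fun d => ⟨0, by simp⟩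
    | succ m ih =>
      intro d
      obtain ⟨lam, hlam⟩ := ih fun k => d k - d m * c m k
      refine ⟨Function.update lam m (d m), ?_⟩
      have hvm : v m = u m - ∑ k ∈ range m, c m k • v k := by
        rw [huv m, Finset.sum_range_succ, hcdiag, one_smul]; ring
      rw [Finset.sum_range_succ, Finset.sum_range_succ, hvm, Function.update_self]
      have h1 : ∑ k ∈ range m, Function.update lam m (d m) k • u k
          = ∑ k ∈ range m, lam k • u k :=
        Finset.sum_congr rfl fun k hk => by
          rw [Function.update_of_ne (Nat.ne_of_lt (mem_range.mp hk))]
      rw [h1, ← hlam]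
      have h2 : ∑ k ∈ range m, (d k - d m * c m k) • v k
          = ∑ k ∈ range m, d k • v k - ∑ k ∈ range m, d m • c m k • v k := by
        rw [← Finset.sum_sub_distrib]
        exact Finset.sum_congr rfl fun k _ => by rw [sub_smul, smul_smul]
      rw [h2, smul_sub, Finset.smul_sum]
      abel
  have flip : ∀ (z : ℂ) (a b : ℕ), z / (h a - h b) = -(z / (h b - h a)) := fun z a b => by
    rw [← div_neg, neg_sub]
  have PF : ∀ a b c : ℕ, h b - h a ≠ 0 → h c - h a ≠ 0 → h c - h b ≠ 0 →
      (h b - h a)⁻¹ * (h c - h b)⁻¹ - (h c - h a)⁻¹ * (h c - h b)⁻¹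
        - (h b - h a)⁻¹ * (h c - h a)⁻¹ = 0 := by
    intro a b c e1 e2 e3
    field_simp
    ring
  have hXv : ∀ k, X * v k = v (k + 1) + x k • v k := by
    intro k
    simp only [hv, Finset.prod_range_succ, Polynomial.smul_eq_C_mul]
    ring
  intro n hn
  set B : ℂ := x n + g (n + 1) / (h n - h (n + 1)) - g n / (h (n - 1) - h n) with hB
  set A : ℂ := g n / (h (n - 1) - h n) *
      (g (n - 1) / (h (n - 2) - h n) - g n / (h (n - 1) - h n)
        + g (n + 1) / (h (n - 1) - h (n + 1)) + x n - x (n - 1)) with hA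
  obtain ⟨d, hd⟩ : ∃ d : ℕ → ℂ, ∀ k, d k =
      (if k = 0 then 0 else c n (k - 1)) + c n k * x k - c (n + 1) k
        - B * c n k - A * c (n - 1) k := ⟨_, fun _ => rfl⟩
  have hXu : X * u n = ∑ k ∈ range (n + 1), (c n k • v (k + 1) + (c n k * x k) • v k) := by
    rw [huv n, Finset.mul_sum]
    exact Finset.sum_congr rfl fun k _ => by
      rw [mul_smul_comm, hXv, smul_add, smul_smul]
  have hXu2 : X * u n = ∑ k ∈ range (n + 2),
      ((if k = 0 then 0 else c n (k - 1)) + (if k ≤ n then c n k * x k else 0)) • v k := by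
    rw [hXu, Finset.sum_add_distrib]
    have h1 : ∑ k ∈ range (n + 1), c n k • v (k + 1)
        = ∑ k ∈ range (n + 2), (if k = 0 then (0 : ℂ) else c n (k - 1)) • v k := by
      rw [Finset.sum_range_succ' (fun k => (if k = 0 then (0 : ℂ) else c n (k - 1)) • v k) (n + 1)]
      simp
    have h2 : ∑ k ∈ range (n + 1), (c n k * x k) • v k
        = ∑ k ∈ range (n + 2), (if k ≤ n then c n k * x k else 0) • v k := by
      rw [← Finset.sum_subset (Finset.range_subset_range.mpr (by omega : n + 1 ≤ n + 2))
        (fun k hk hk2 => by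
          rw [if_neg (by simp only [mem_range] at hk2 ⊢; omega), zero_smul])]
      exact Finset.sum_congr rfl fun k hk => by
        rw [if_pos (by simp only [mem_range] at hk; omega)]
    rw [h1, h2, ← Finset.sum_add_distrib]
    exact Finset.sum_congr rfl fun k _ => (add_smul _ _ _).symm
  have extu : ∀ M, M + 1 ≤ n + 2 → u M = ∑ k ∈ range (n + 2),
      (if k ≤ M then c M k else 0) • v k := by
    intro M hM
    rw [huv M,
      ← Finset.sum_subset (Finset.range_subset_range.mpr hM)
        (fun k hk hk2 => by
          rw [if_neg (by simp only [mem_range] at hk2 ⊢; omega), zero_smul])]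
    exact Finset.sum_congr rfl fun k hk => by
      rw [if_pos (by simp only [mem_range] at hk; omega)]
  have extd : ∑ k ∈ range (n - 1), d k • v k = ∑ k ∈ range (n + 2),
      (if k < n - 1 then d k else 0) • v k := by
    rw [← Finset.sum_subset (Finset.range_subset_range.mpr (by omega : n - 1 ≤ n + 2))
      (fun k hk hk2 => by
        rw [if_neg (by simp only [mem_range] at hk2 ⊢; omega), zero_smul])]
    exact Finset.sum_congr rfl fun k hk => by rw [if_pos (mem_range.mp hk)]
  have key : X * u n - (u (n + 1) + B • u n + A • u (n - 1))
      = ∑ k ∈ range (n - 1), d k • v k := by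
    rw [hXu2, extu (n + 1) le_rfl, extu n (by omega), extu (n - 1) (by omega), extd,
      Finset.smul_sum, Finset.smul_sum, ← Finset.sum_add_distrib, ← Finset.sum_add_distrib,
      ← Finset.sum_sub_distrib]
    refine Finset.sum_congr rfl fun k hk => ?_
    rw [smul_smul, smul_smul, ← add_smul, ← add_smul, ← sub_smul]
    congr 1
    have hk' : k < n + 2 := mem_range.mp hk
    by_cases h1 : k < n - 1
    · have c2 : k ≤ n := by omega
      have c3 : k ≤ n + 1 := by omega
      have c4 : k ≤ n - 1 := by omega
      rw [hd]
      simp only [if_pos h1, if_pos c2, if_pos c3, if_pos c4]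
      ring
    · rw [if_neg h1]
      have hcases : k = n - 1 ∨ k = n ∨ k = n + 1 := by omega
      rcases hcases with hk1 | hk1 | hk1
      · subst hk1
        simp only [if_pos (le_refl (n - 1)), if_pos (by omega : n - 1 ≤ n),
          if_pos (by omega : n - 1 ≤ n + 1), hcdiag]
        rcases Nat.lt_or_ge n 2 with h2 | h2
        · have hn1 : n = 1 := by omega
          subst hn1
          rw [hB, hA]
          simp only [show (1:ℕ) - 1 = 0 from rfl, show (1:ℕ) - 2 = 0 from rfl,
            show (1:ℕ) + 1 = 2 from rfl, if_pos (rfl : (0:ℕ) = 0), eq_self_iff_true, if_true]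
          rw [show c 1 0 = g 1 / (h 1 - h 0) from hc1 0,
            show c 2 0 = g 1 / (h 2 - h 0) * (g 2 / (h 2 - h 1)) from hc2 0, hg0]
          have f01 : ∀ z : ℂ, z / (h 0 - h 1) = -(z / (h 1 - h 0)) := fun z => flip z 0 1
          have f02 : ∀ z : ℂ, z / (h 0 - h 2) = -(z / (h 2 - h 0)) := fun z => flip z 0 2
          have f12 : ∀ z : ℂ, z / (h 1 - h 2) = -(z / (h 2 - h 1)) := fun z => flip z 1 2
          simp only [f01, f02, f12]
          have e1 := hne 1 0 (by omega)
          have e2 := hne 2 0 (by omega)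
          have e3 := hne 2 1 (by omega)
          linear_combination (g 1 * g 2) * PF 0 1 2 e1 e2 e3
        · obtain ⟨p, rfl⟩ : ∃ p, n = p + 2 := ⟨n - 2, by omega⟩
          rw [hB, hA]
          simp only [show p + 2 - 1 = p + 1 from rfl, show p + 2 - 2 = p from rfl,
            show p + 1 - 1 = p from rfl, show p + 2 + 1 = p + 3 from rfl,
            if_neg (by omega : ¬ p + 1 = 0)]
          rw [show c (p + 2) p
                = g (p + 1) / (h (p + 2) - h p) * (g (p + 2) / (h (p + 2) - h (p + 1)))
              from hc2 p,
            show c (p + 2) (p + 1) = g (p + 2) / (h (p + 2) - h (p + 1)) from hc1 (p + 1),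
            show c (p + 3) (p + 1)
                = g (p + 2) / (h (p + 3) - h (p + 1)) * (g (p + 3) / (h (p + 3) - h (p + 2)))
              from hc2 (p + 1)]
          have f1 : ∀ z : ℂ, z / (h (p + 1) - h (p + 2)) = -(z / (h (p + 2) - h (p + 1))) :=
            fun z => flip z (p + 1) (p + 2)
          have f2 : ∀ z : ℂ, z / (h p - h (p + 2)) = -(z / (h (p + 2) - h p)) :=
            fun z => flip z p (p + 2)
          have f3 : ∀ z : ℂ, z / (h (p + 1) - h (p + 3)) = -(z / (h (p + 3) - h (p + 1))) :=
            fun z => flip z (p + 1) (p + 3)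
          have f4 : ∀ z : ℂ, z / (h (p + 2) - h (p + 3)) = -(z / (h (p + 3) - h (p + 2))) :=
            fun z => flip z (p + 2) (p + 3)
          simp only [f1, f2, f3, f4]
          have e1 := hne (p + 2) (p + 1) (by omega)
          have e3 := hne (p + 3) (p + 1) (by omega)
          have e4 := hne (p + 3) (p + 2) (by omega)
          linear_combination (g (p + 2) * g (p + 3)) * PF (p + 1) (p + 2) (p + 3) e1 e3 e4
      · rw [hk1]
        simp only [if_pos (le_refl n), if_pos (by omega : n ≤ n + 1),
          if_neg (by omega : ¬ n ≤ n - 1), if_neg (by omega : ¬ n < n - 1),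
          if_neg (by omega : ¬ n = 0), hcdiag]
        obtain ⟨q, rfl⟩ : ∃ q, n = q + 1 := ⟨n - 1, by omega⟩
        rw [hB]
        simp only [show q + 1 - 1 = q from rfl, show q + 1 + 1 = q + 2 from rfl]
        rw [show c (q + 1) q = g (q + 1) / (h (q + 1) - h q) from hc1 q,
          show c (q + 2) (q + 1) = g (q + 2) / (h (q + 2) - h (q + 1)) from hc1 (q + 1)]
        have f1 : ∀ z : ℂ, z / (h q - h (q + 1)) = -(z / (h (q + 1) - h q)) :=
          fun z => flip z q (q + 1)
        have f2 : ∀ z : ℂ, z / (h (q + 1) - h (q + 2)) = -(z / (h (q + 2) - h (q + 1))) :=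
          fun z => flip z (q + 1) (q + 2)
        simp only [f1, f2]
        ring
      · subst hk1
        simp only [if_neg (by omega : ¬ n + 1 ≤ n), if_pos (le_refl (n + 1)),
          if_neg (by omega : ¬ n + 1 ≤ n - 1), if_neg (by omega : ¬ n + 1 < n - 1),
          if_neg (by omega : ¬ n + 1 = 0), Nat.add_sub_cancel, hcdiag]
        ring
  obtain ⟨lam, hlam⟩ := span (n - 1) d
  refine ⟨lam, ?_⟩
  rw [← hlam, ← key]
  abel
end

section
/- Let z ∈ ℂ and let s, s' : ℕ → ℂ both satisfy (E3). Then the pointwise (Hadamard) product k ↦ s_k·s'_k satisfies (E5). -/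
/-- A sequence satisfies (E3) if `s_{k+3} = z(s_{k+2} − s_{k+1}) + s_k`. -/
def SatE3 (z : ℂ) (s : ℕ → ℂ) : Prop :=
  ∀ k : ℕ, s (k + 3) = z * (s (k + 2) - s (k + 1)) + s k

/-- A sequence satisfies (E5) if
`s_{k+5} = (z²−z−1)(s_{k+4} − s_{k+1}) − (z−1)(z²−z−1)(s_{k+3} − s_{k+2}) + s_k`. -/
def SatE5 (z : ℂ) (s : ℕ → ℂ) : Prop :=
  ∀ k : ℕ, s (k + 5) =
    (z ^ 2 - z - 1) * (s (k + 4) - s (k + 1))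
      - (z - 1) * (z ^ 2 - z - 1) * (s (k + 3) - s (k + 2)) + s k

/-- the Hadamard product of two solutions of (E3) satisfies (E5). -/
theorem stmt4 (z : ℂ) (s s' : ℕ → ℂ) (hs : SatE3 z s) (hs' : SatE3 z s') :
    SatE5 z (fun k => s k * s' k) := by
  intro k
  have h3 := hs k
  have h4 : s (k + 4) = z * (s (k + 3) - s (k + 2)) + s (k + 1) := hs (k + 1)
  have h5 : s (k + 5) = z * (s (k + 4) - s (k + 3)) + s (k + 2) := hs (k + 2)
  have h3' := hs' k
  have h4' : s' (k + 4) = z * (s' (k + 3) - s' (k + 2)) + s' (k + 1) := hs' (k + 1)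
  have h5' : s' (k + 5) = z * (s' (k + 4) - s' (k + 3)) + s' (k + 2) := hs' (k + 2)
  simp only
  rw [h5, h5', h4, h4', h3, h3']
  ring
end

section
/- Let z ∈ ℂ and let h : ℕ → ℂ satisfy (E3). Then for every fixed m ≥ 0 the difference sequence k ↦ h_k − h_{k+m} satisfies (E2). -/
/-- A sequence satisfies (E2) if `s_{k+2} = (z−1)s_{k+1} − s_k`. -/
def SatE2 (z : ℂ) (s : ℕ → ℂ) : Prop :=
  ∀ k : ℕ, s (k + 2) = (z - 1) * s (k + 1) - s k

/-- if `h` satisfies (E3) then for every fixed `m ≥ 0` the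
difference sequence `k ↦ h_k − h_{k+m}` satisfies (E2). -/
theorem stmt5 (z : ℂ) (h : ℕ → ℂ) (hh : SatE3 z h) :
    ∀ m : ℕ, SatE2 z (fun k => h k - h (k + m)) := by
  -- f k := h (k+2) - (z-1) h (k+1) + h k is constant
  have hf : ∀ k : ℕ, h (k + 3) - (z - 1) * h (k + 2) + h (k + 1)
      = h (k + 2) - (z - 1) * h (k + 1) + h k := by
    intro k
    have := hh k
    linear_combination this
  have hconst : ∀ k j : ℕ, h (k + j + 2) - (z - 1) * h (k + j + 1) + h (k + j)
      = h (k + 2) - (z - 1) * h (k + 1) + h k := by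
    intro k j
    induction j with
    | zero => rfl
    | succ n ih =>
      have := hf (k + n)
      calc h (k + (n + 1) + 2) - (z - 1) * h (k + (n + 1) + 1) + h (k + (n + 1))
          = h (k + n + 3) - (z - 1) * h (k + n + 2) + h (k + n + 1) := by ring_nf
        _ = h (k + n + 2) - (z - 1) * h (k + n + 1) + h (k + n) := this
        _ = h (k + 2) - (z - 1) * h (k + 1) + h k := ih
  intro m k
  simp only
  have := hconst k m
  have e1 : k + 2 + m = k + m + 2 := by ring
  have e2 : k + 1 + m = k + m + 1 := by ring
  rw [e1, e2]
  linear_combination -this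
end

section
/- Let z ∈ ℂ, let h : ℕ → ℂ satisfy (E3), and let p, r : ℕ → ℂ satisfy (E2) with p_0 = 1, p_1 = z−1 and r_0 = 1, r_1 = z. Then for all k ≥ 0 and m ≥ 1, h_k − h_{k+2m} = (h_{k-1+m} − h_{k+1+m})·p_{m-1}, and for all k ≥ 0 and m ≥ 0, h_k − h_{k+2m+1} = (h_{k+m} − h_{k+m+1})·r_m. -/
/-- for `h` a solution of (E3):
`h_k − h_{k+2m} = (h_{k−1+m} − h_{k+1+m})·p_{m−1}` for `m ≥ 1` (here stated
with `m+1` in place of `m`), and `h_k − h_{k+2m+1} = (h_{k+m} − h_{k+m+1})·r_m`,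
where `p, r` solve (E2) with `p_0 = 1, p_1 = z−1` and `r_0 = 1, r_1 = z`. -/
theorem stmt9 (z : ℂ) (h : ℕ → ℂ) (hh : SatE3 z h)
    (p r : ℕ → ℂ) (hp : SatE2 z p) (hr : SatE2 z r)
    (hp0 : p 0 = 1) (hp1 : p 1 = z - 1) (hr0 : r 0 = 1) (hr1 : r 1 = z) :
    (∀ k m : ℕ, h k - h (k + 2 * (m + 1)) = (h (k + m) - h (k + m + 2)) * p m) ∧
    (∀ k m : ℕ, h k - h (k + 2 * m + 1) = (h (k + m) - h (k + m + 1)) * r m) := by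
  have hG : ∀ a b : ℕ, h (a + b + 2) - (z - 1) * h (a + b + 1) + h (a + b)
      = h (a + 2) - (z - 1) * h (a + 1) + h a := by
    intro a b
    induction b with
    | zero => rfl
    | succ n ih =>
      have e := hh (a + n)
      have i1 : a + (n + 1) + 2 = a + n + 3 := by ring
      have i2 : a + (n + 1) + 1 = a + n + 2 := by ring
      have i3 : a + (n + 1) = a + n + 1 := by ring
      rw [i1, i2, i3, ← ih]
      linear_combination e
  constructor
  · suffices H : ∀ m, (∀ k, h k - h (k + 2 * (m + 1)) = (h (k + m) - h (k + m + 2)) * p m) ∧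
        (∀ k, h k - h (k + 2 * (m + 2)) = (h (k + m + 1) - h (k + m + 3)) * p (m + 1)) by
      intro k m; exact (H m).1 k
    intro m
    induction m with
    | zero =>
      refine ⟨fun k => ?_, fun k => ?_⟩
      · rw [hp0]; ring_nf
      · have e1 := hh k
        have e2 := hh (k + 1)
        rw [hp1]
        ring_nf at e1 e2 ⊢
        linear_combination -e1 - e2
    | succ n ih =>
      refine ⟨ih.2, fun k => ?_⟩
      have e1 := ih.2 (k + 1)
      have e2 := ih.1 (k + 2)
      have eg := hG k (2 * n + 4)
      have ep := hp n
      ring_nf at e1 e2 eg ep ⊢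
      linear_combination (z - 1) * e1 - e2 - eg - (h (2 + k + n) - h (4 + k + n)) * ep
  · suffices H : ∀ m, (∀ k, h k - h (k + 2 * m + 1) = (h (k + m) - h (k + m + 1)) * r m) ∧
        (∀ k, h k - h (k + 2 * (m + 1) + 1) = (h (k + m + 1) - h (k + m + 2)) * r (m + 1)) by
      intro k m; exact (H m).1 k
    intro m
    induction m with
    | zero =>
      refine ⟨fun k => ?_, fun k => ?_⟩
      · rw [hr0]; ring_nf
      · have e1 := hh k
        rw [hr1]
        ring_nf at e1 ⊢
        linear_combination -e1
    | succ n ih =>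
      refine ⟨ih.2, fun k => ?_⟩
      have e1 := ih.2 (k + 1)
      have e2 := ih.1 (k + 2)
      have eg := hG k (2 * n + 3)
      have er := hr n
      ring_nf at e1 e2 eg er ⊢
      linear_combination (z - 1) * e1 - e2 - eg - (h (2 + k + n) - h (3 + k + n)) * er
end

section
/- Let z ∈ ℂ, let h : ℕ → ℂ satisfy (E3), and let p, r : ℕ → ℂ satisfy (E2) with p_0 = 1, p_1 = z−1 and r_0 = 1, r_1 = z. If p_m ≠ 0 and r_m ≠ 0 for all m ≥ 0, and h_k ≠ h_{k+1} and h_k ≠ h_{k+2} for all k ≥ 0, then h is injective, i.e. h_k ≠ h_n whenever k ≠ n. -/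
/-- The combination `h_{n+2} − (z−1)h_{n+1} + h_n` is constant for E3 sequences. -/
lemma Fconst (z : ℂ) (h : ℕ → ℂ) (hh : SatE3 z h) :
    ∀ n : ℕ, h (n + 2) - (z - 1) * h (n + 1) + h n
      = h 2 - (z - 1) * h 1 + h 0 := by
  intro n
  induction n with
  | zero => rfl
  | succ n ih =>
    have e3 := hh n
    have : h (n + 1 + 2) - (z - 1) * h (n + 1 + 1) + h (n + 1)
        = h (n + 2) - (z - 1) * h (n + 1) + h n := by
      have e1 : n + 1 + 2 = n + 3 := by ring
      have e2 : n + 1 + 1 = n + 2 := by ring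
      rw [e1, e2]
      linear_combination e3
    rw [this, ih]

lemma key_odd (z : ℂ) (h : ℕ → ℂ) (hh : SatE3 z h) (r : ℕ → ℂ) (hr : SatE2 z r)
    (hr0 : r 0 = 1) (hr1 : r 1 = z) :
    ∀ m k : ℕ, h (k + 2 * m + 1) - h k = r m * (h (k + m + 1) - h (k + m)) := by
  intro m
  induction m using Nat.strong_induction_on with
  | _ m ih =>
    match m with
    | 0 =>
      intro k
      simp [hr0]
    | 1 =>
      intro k
      have e3 := hh k
      have e1 : k + 2 * 1 + 1 = k + 3 := by ring
      have e2 : k + 1 + 1 = k + 2 := by ring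
      rw [e1, hr1, e2]
      linear_combination e3
    | (m + 2) =>
      intro k
      have A := ih (m + 1) (by omega) (k + 1)
      have B := ih m (by omega) (k + 2)
      have C := (Fconst z h hh (k + 2 * m + 3)).trans (Fconst z h hh k).symm
      have hrrec := hr m
      -- normalize all the index arithmetic
      have eA : h (k + 2 * m + 4) - h (k + 1)
          = r (m + 1) * (h (k + m + 3) - h (k + m + 2)) := by
        have i1 : k + 1 + 2 * (m + 1) + 1 = k + 2 * m + 4 := by ring
        have i2 : k + 1 + (m + 1) + 1 = k + m + 3 := by ring
        have i3 : k + 1 + (m + 1) = k + m + 2 := by ring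
        rw [i1, i2, i3] at A; exact A
      have eB : h (k + 2 * m + 3) - h (k + 2)
          = r m * (h (k + m + 3) - h (k + m + 2)) := by
        have i1 : k + 2 + 2 * m + 1 = k + 2 * m + 3 := by ring
        have i2 : k + 2 + m + 1 = k + m + 3 := by ring
        have i3 : k + 2 + m = k + m + 2 := by ring
        rw [i1, i2, i3] at B; exact B
      have eC : h (k + 2 * m + 5) - (z - 1) * h (k + 2 * m + 4) + h (k + 2 * m + 3)
          = h (k + 2) - (z - 1) * h (k + 1) + h k := by
        have i1 : k + 2 * m + 3 + 2 = k + 2 * m + 5 := by ring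
        have i2 : k + 2 * m + 3 + 1 = k + 2 * m + 4 := by ring
        rw [i1, i2] at C
        exact C
      have i1 : k + 2 * (m + 2) + 1 = k + 2 * m + 5 := by ring
      have i2 : k + (m + 2) + 1 = k + m + 3 := by ring
      have i3 : k + (m + 2) = k + m + 2 := by ring
      rw [i1, i2, i3]
      linear_combination (z - 1) * eA - eB + eC - (h (k + m + 3) - h (k + m + 2)) * hrrec

lemma key_even (z : ℂ) (h : ℕ → ℂ) (hh : SatE3 z h) (p : ℕ → ℂ) (hp : SatE2 z p)
    (hp0 : p 0 = 1) (hp1 : p 1 = z - 1) :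
    ∀ m k : ℕ, h (k + 2 * m + 2) - h k = p m * (h (k + m + 2) - h (k + m)) := by
  intro m
  induction m using Nat.strong_induction_on with
  | _ m ih =>
    match m with
    | 0 =>
      intro k
      simp [hp0]
    | 1 =>
      intro k
      have e3 := hh k
      have e4 := hh (k + 1)
      have e1 : k + 2 * 1 + 2 = k + 4 := by ring
      have e2 : k + 1 + 2 = k + 3 := by ring
      rw [e1, hp1, e2]
      have i1 : k + 1 + 3 = k + 4 := by ring
      have i2 : k + 1 + 2 = k + 3 := by ring
      have i3 : k + 1 + 1 = k + 2 := by ring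
      rw [i1, i2, i3] at e4
      linear_combination e3 + e4
    | (m + 2) =>
      intro k
      have A := ih (m + 1) (by omega) (k + 1)
      have B := ih m (by omega) (k + 2)
      have C := (Fconst z h hh (k + 2 * m + 2)).trans (Fconst z h hh k).symm
      have hprec := hp m
      have eA : h (k + 2 * m + 5) - h (k + 1)
          = p (m + 1) * (h (k + m + 4) - h (k + m + 2)) := by
        have i1 : k + 1 + 2 * (m + 1) + 2 = k + 2 * m + 5 := by ring
        have i2 : k + 1 + (m + 1) + 2 = k + m + 4 := by ring
        have i3 : k + 1 + (m + 1) = k + m + 2 := by ring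
        rw [i1, i2, i3] at A; exact A
      have eB : h (k + 2 * m + 4) - h (k + 2)
          = p m * (h (k + m + 4) - h (k + m + 2)) := by
        have i1 : k + 2 + 2 * m + 2 = k + 2 * m + 4 := by ring
        have i2 : k + 2 + m + 2 = k + m + 4 := by ring
        have i3 : k + 2 + m = k + m + 2 := by ring
        rw [i1, i2, i3] at B; exact B
      have eC : h (k + 2 * m + 6) - (z - 1) * h (k + 2 * m + 5) + h (k + 2 * m + 4)
          = h (k + 2) - (z - 1) * h (k + 1) + h k := by
        have i1 : k + 2 * m + 2 + 2 + 2 = k + 2 * m + 6 := by ring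
        have i2 : k + 2 * m + 2 + 2 + 1 = k + 2 * m + 5 := by ring
        have i3 : k + 2 * m + 2 + 2 = k + 2 * m + 4 := by ring
        have C' := (Fconst z h hh (k + 2 * m + 2 + 2)).trans (Fconst z h hh k).symm
        rw [i1, i2, i3] at C'
        exact C'
      have i1 : k + 2 * (m + 2) + 2 = k + 2 * m + 6 := by ring
      have i2 : k + (m + 2) + 2 = k + m + 4 := by ring
      have i3 : k + (m + 2) = k + m + 2 := by ring
      rw [i1, i2, i3]
      linear_combination (z - 1) * eA - eB + eC - (h (k + m + 4) - h (k + m + 2)) * hprec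

/-- if `p_m ≠ 0` and `r_m ≠ 0` for all `m`, and consecutive
differences `h_k − h_{k+1}` and `h_k − h_{k+2}` never vanish, then `h` is
injective. -/
theorem stmt10 (z : ℂ) (h : ℕ → ℂ) (hh : SatE3 z h)
    (p r : ℕ → ℂ) (hp : SatE2 z p) (hr : SatE2 z r)
    (hp0 : p 0 = 1) (hp1 : p 1 = z - 1) (hr0 : r 0 = 1) (hr1 : r 1 = z)
    (hpne : ∀ m : ℕ, p m ≠ 0) (hrne : ∀ m : ℕ, r m ≠ 0)
    (h1 : ∀ k : ℕ, h k ≠ h (k + 1)) (h2 : ∀ k : ℕ, h k ≠ h (k + 2)) :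
    Function.Injective h := by
  have aux : ∀ k t : ℕ, h (k + t + 1) ≠ h k := by
    intro k t
    rcases Nat.even_or_odd t with ⟨m, hm⟩ | ⟨m, hm⟩
    · -- t = 2m, gap = 2m+1, odd case
      have key := key_odd z h hh r hr hr0 hr1 m k
      have hd : h (k + m + 1) - h (k + m) ≠ 0 := by
        intro hc
        exact h1 (k + m) (sub_eq_zero.mp hc).symm
      intro hc
      have : h (k + 2 * m + 1) - h k = 0 := by
        have : k + t + 1 = k + 2 * m + 1 := by omega
        rw [this] at hc; rw [hc]; ring
      rw [key] at this
      exact (mul_ne_zero (hrne m) hd) this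
    · -- t = 2m+1, gap = 2m+2, even case
      have key := key_even z h hh p hp hp0 hp1 m k
      have hd : h (k + m + 2) - h (k + m) ≠ 0 := by
        intro hc
        exact h2 (k + m) (sub_eq_zero.mp hc).symm
      intro hc
      have : h (k + 2 * m + 2) - h k = 0 := by
        have : k + t + 1 = k + 2 * m + 2 := by omega
        rw [this] at hc; rw [hc]; ring
      rw [key] at this
      exact (mul_ne_zero (hpne m) hd) this
  intro a b hab
  by_contra hne
  rcases Nat.lt_or_ge a b with hlt | hge
  · obtain ⟨t, ht⟩ := Nat.exists_eq_add_of_lt hlt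
    exact aux a t (by rw [ht] at hab; exact hab.symm)
  · have hlt : b < a := lt_of_le_of_ne hge (Ne.symm hne)
    obtain ⟨t, ht⟩ := Nat.exists_eq_add_of_lt hlt
    exact aux b t (by rw [ht] at hab; exact hab)
end

section
/- Let a_0, a_1, a_2, d_1, d_2 ∈ ℂ with a_1 + k·a_2 ≠ 0 for all integers k ≥ 0. Define h_k = a_0 + a_1·k + a_2·k(k−1) and g_k = d_1·k + d_2·k(k−1) for k ≥ 0 (so h is injective), and let u_n(t) = t^n + Σ_{k=0}^{n-1} ( ∏_{j=k}^{n-1} g_{j+1}/(h_n − h_j) )·t^k. Then for every n ≥ 0 the polynomial u_n satisfies the second-order differential equation (d_2·t + a_2·t²)·u_n''(t) + (d_1 + a_1·t)·u_n'(t) + a_0·u_n(t) = h_n·u_n(t). -/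
open Polynomial Finset

/-- with `h_k = a_0 + a_1 k + a_2 k(k−1)`,
`g_k = d_1 k + d_2 k(k−1)` and `a_1 + k a_2 ≠ 0` for all `k ≥ 0` (so that `h`
is injective), the monic polynomials
`u_n(t) = t^n + Σ_{k<n} (∏_{j=k}^{n-1} g_{j+1}/(h_n − h_j)) t^k`
satisfy the second-order differential equation
`(d_2 t + a_2 t²)u_n'' + (d_1 + a_1 t)u_n' + a_0 u_n = h_n u_n`. -/
theorem stmt18 (a0 a1 a2 d1 d2 : ℂ)
    (ha : ∀ k : ℕ, a1 + (k : ℂ) * a2 ≠ 0)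
    (h g : ℕ → ℂ)
    (hh : ∀ k : ℕ, h k = a0 + a1 * (k : ℂ) + a2 * (k : ℂ) * ((k : ℂ) - 1))
    (hg : ∀ k : ℕ, g k = d1 * (k : ℂ) + d2 * (k : ℂ) * ((k : ℂ) - 1))
    (u : ℕ → Polynomial ℂ)
    (hu : ∀ n, u n = X ^ n + ∑ k ∈ Finset.range n,
      (∏ j ∈ Finset.Ico k n, g (j + 1) / (h n - h j)) • X ^ k) :
    ∀ n : ℕ,
      (C d2 * X + C a2 * X ^ 2) * derivative (derivative (u n))
        + (C d1 + C a1 * X) * derivative (u n) + C a0 * u n = C (h n) * u n := by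
  intro n
  -- nonvanishing of h n - h k for k < n
  have hne : ∀ k, k < n → h n - h k ≠ 0 := by
    intro k hk
    have h1 : 1 ≤ n := Nat.one_le_of_lt (Nat.lt_of_le_of_lt (Nat.zero_le k) hk)
    have ha' := ha (n + k - 1)
    have hcast : ((n + k - 1 : ℕ) : ℂ) = (n : ℂ) + (k : ℂ) - 1 := by
      have : 1 ≤ n + k := le_trans h1 (Nat.le_add_right n k)
      push_cast [Nat.cast_sub this]
      ring
    rw [hcast] at ha'
    have hnk : (n : ℂ) - (k : ℂ) ≠ 0 := by
      have : (n : ℂ) ≠ (k : ℂ) := by exact_mod_cast (Nat.ne_of_lt hk).symm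
      exact sub_ne_zero.mpr this
    rw [hh, hh]
    have : a0 + a1 * (n : ℂ) + a2 * (n : ℂ) * ((n : ℂ) - 1)
        - (a0 + a1 * (k : ℂ) + a2 * (k : ℂ) * ((k : ℂ) - 1))
        = ((n : ℂ) - (k : ℂ)) * (a1 + ((n : ℂ) + (k : ℂ) - 1) * a2) := by ring
    rw [this]
    exact mul_ne_zero hnk ha'
  set c : ℕ → ℂ := fun k => ∏ j ∈ Finset.Ico k n, g (j + 1) / (h n - h j) with hc
  have hcn : c n = 1 := by simp [hc]
  have hun : u n = ∑ k ∈ Finset.range (n + 1), C (c k) * X ^ k := by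
    rw [hu, Finset.sum_range_succ, hcn]
    simp only [smul_eq_C_mul, hc, map_one, one_mul]
    ring
  -- action of the operator on monomials
  have key : ∀ k : ℕ,
      (C d2 * X + C a2 * X ^ 2) * derivative (derivative (X ^ k : ℂ[X]))
        + (C d1 + C a1 * X) * derivative (X ^ k : ℂ[X]) + C a0 * X ^ k
      = C (g k) * X ^ (k - 1) + C (h k) * X ^ k := by
    intro k
    match k with
    | 0 => simp [hg, hh]
    | 1 =>
      have e1 : g 1 = d1 := by rw [hg]; push_cast; ring
      have e2 : h 1 = a0 + a1 := by rw [hh]; push_cast; ring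
      rw [e1, e2]
      simp only [pow_one, derivative_X, derivative_one, mul_zero, zero_add, mul_one, pow_zero,
        C_add]
      ring
    | (k + 2) =>
      rw [derivative_X_pow, derivative_C_mul, derivative_X_pow]
      rw [hg (k + 2), hh (k + 2)]
      have e1 : k + 2 - 1 = k + 1 := by omega
      rw [e1]
      have e2 : k + 1 - 1 = k := by omega
      rw [e2]
      push_cast
      simp only [C_add, C_mul, C_sub, C_1, C_0, map_ofNat]
      ring
  rw [hun]
  simp only [derivative_sum, derivative_C_mul, Finset.mul_sum]
  rw [← Finset.sum_add_distrib, ← Finset.sum_add_distrib]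
  have lhs_eq : ∀ k ∈ Finset.range (n + 1),
      (C d2 * X + C a2 * X ^ 2) * (C (c k) * derivative (derivative (X ^ k : ℂ[X])))
        + (C d1 + C a1 * X) * (C (c k) * derivative (X ^ k : ℂ[X]))
        + C a0 * (C (c k) * X ^ k)
      = C (c k * g k) * X ^ (k - 1) + C (c k * h k) * X ^ k := by
    intro k _
    have := key k
    calc (C d2 * X + C a2 * X ^ 2) * (C (c k) * derivative (derivative (X ^ k : ℂ[X])))
        + (C d1 + C a1 * X) * (C (c k) * derivative (X ^ k : ℂ[X]))
        + C a0 * (C (c k) * X ^ k)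
        = C (c k) * ((C d2 * X + C a2 * X ^ 2) * derivative (derivative (X ^ k : ℂ[X]))
        + (C d1 + C a1 * X) * derivative (X ^ k : ℂ[X]) + C a0 * X ^ k) := by ring
      _ = C (c k) * (C (g k) * X ^ (k - 1) + C (h k) * X ^ k) := by rw [this]
      _ = C (c k * g k) * X ^ (k - 1) + C (c k * h k) * X ^ k := by
          simp [C_mul]; ring
  rw [Finset.sum_congr rfl lhs_eq]
  -- now reduce to the telescoping identity
  rw [Finset.sum_add_distrib]
  have main : ∑ k ∈ Finset.range (n + 1), C (c k * g k) * X ^ (k - 1)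
      = ∑ k ∈ Finset.range (n + 1), C ((h n - h k) * c k) * X ^ k := by
    rw [Finset.sum_range_succ']
    rw [Finset.sum_range_succ (fun k => C ((h n - h k) * c k) * X ^ k)]
    simp only [Nat.cast_zero, sub_self, Nat.add_sub_cancel]
    have hg0 : g 0 = 0 := by simp [hg]
    rw [hg0]
    simp only [mul_zero, map_zero, zero_mul, add_zero, sub_self, zero_mul, map_zero]
    refine Finset.sum_congr rfl ?_
    intro k hk
    have hk' : k < n := Finset.mem_range.mp hk
    have hstep : c k = g (k + 1) / (h n - h k) * c (k + 1) := by
      simp only [hc]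
      exact Finset.prod_eq_prod_Ico_succ_bot hk' _
    congr 1
    rw [hstep]
    field_simp [hne k hk']
  rw [main, ← Finset.sum_add_distrib]
  refine Finset.sum_congr rfl ?_
  intro k _
  simp only [C_mul, C_sub]
  ring
end
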